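/- For all k ≥ 2, W_k = 01 · ∏_{i=0}^{k-2} (2 ⊕ W_i), where ∏ denotes concatenation in increasing order of i. (For example, W_5 = 01 · 2 · 23 · 234 · 23445.) -/
import Mathlib


/-- The morphism `phi` on the alphabet `ℕ`: `phi (2i) = (2i)(2i+1)` and `phi (2i+1) = (2i+2)`. -/
def phi (a : ℕ) : List ℕ := if a % 2 = 0 then [a, a + 1] else [a + 1]

/-- The finite ZWW words: `W n = phi^n(0)`, so `W 0 = 0`, `W 1 = 01`, `W 2 = 012`, `W 3 = 01223`. -/
def W (n : ℕ) : List ℕ := (fun w => w.flatMap phi)^[n] [0]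

lemma W_succ (n : ℕ) : W (n + 1) = (W n).flatMap phi := by
  simp [W, Function.iterate_succ_apply']

lemma phi_shift (a : ℕ) : phi (a + 2) = (phi a).map (· + 2) := by
  unfold phi
  rcases Nat.even_or_odd a with h | h
  · rw [if_pos, if_pos] <;> simp [Nat.even_iff] at h ⊢ <;> omega
  · rw [if_neg, if_neg] <;> simp [Nat.odd_iff] at h ⊢ <;> omega

lemma flatMap_shift (w : List ℕ) :
    (w.map (· + 2)).flatMap phi = (w.flatMap phi).map (· + 2) := by
  induction w with
  | nil => rfl
  | cons a t ih => simp [List.flatMap_cons, ih, phi_shift]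

/-- For all `k ≥ 2`, `W k = 01 · ∏_{i=0}^{k-2} (2 ⊕ W i)`. -/
theorem zww_prefix_factorisation : ∀ k : ℕ, 2 ≤ k →
    W k = [0, 1] ++ ((List.range (k - 1)).map (fun i => (W i).map (· + 2))).flatten := by
  intro k hk
  induction k with
  | zero => omega
  | succ m ih =>
    rcases Nat.lt_or_ge m 2 with hm | hm
    · interval_cases m
      · omega
      · decide
    · have h1 : m + 1 - 1 = (m - 1) + 1 := by omega
      rw [W_succ, ih hm, h1, List.range_succ_eq_map]
      simp only [List.map_cons, List.flatten_cons, List.flatMap_append, List.map_map]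
      have h2 : ∀ l : List (List ℕ), l.flatten.flatMap phi = (l.map (·.flatMap phi)).flatten := by
        intro l
        induction l with
        | nil => rfl
        | cons a t ih2 => simp [ih2]
      rw [h2]
      have h3 : [0, 1].flatMap phi = [0, 1, 2] := by decide
      have h4 : (W 0).map (· + 2) = [2] := by decide
      rw [h3, h4, List.map_map]
      have h5 : (List.range (m - 1)).map ((fun x => x.flatMap phi) ∘
            fun i => (W i).map (· + 2)) =
          (List.range (m - 1)).map ((fun i => (W i).map (· + 2)) ∘ Nat.succ) := by
        apply List.map_congr_left
        intro i _
        simp only [Function.comp]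
        rw [flatMap_shift, ← W_succ]
      rw [h5]
      simp
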